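/- CVaR upper bound (Rockafellar–Uryasev inequality): let μ be a probability measure on a measurable space X, h : X → ℝ a bounded measurable function whose cumulative distribution function a ↦ μ{x : h(x) ≤ a} is continuous, and β ∈ (0,1). Define VaR(β,h,μ) = inf{a ∈ ℝ : μ{x : h(x) ≤ a} ≥ β} and CVaR(β,h,μ) = (1−β)^{−1} ∫_{{x : h(x) ≥ VaR(β,h,μ)}} h dμ. Then for every a ∈ ℝ, CVaR(β,h,μ) ≤ a + (1−β)^{−1} ∫_X max(h(x) − a, 0) dμ(x). -/

import Mathlib

open MeasureTheory

/-- The value at risk at level `β` of the cost `h` under the measure `μ`: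
the least upper bound on `h` that holds with probability `β`. -/
noncomputable def VaR {X : Type*} [MeasurableSpace X]
    (β : ℝ) (h : X → ℝ) (μ : Measure X) : ℝ :=
  sInf {a : ℝ | β ≤ (μ {x | h x ≤ a}).toReal}

/-- The conditional value at risk at level `β` of the cost `h` under the measure `μ`:
the expectation of `h` over its VaR-tail, normalized by `(1-β)`. -/
noncomputable def CVaR {X : Type*} [MeasurableSpace X]
    (β : ℝ) (h : X → ℝ) (μ : Measure X) : ℝ :=
  (1 - β)⁻¹ * ∫ x in {x | VaR β h μ ≤ h x}, h x ∂μ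

/-- **Rockafellar–Uryasev CVaR upper bound.**
For a probability measure `μ`, a bounded measurable cost `h` whose cdf under `μ` is continuous,
and risk level `β ∈ (0,1)`:
`CVaR(β,h,μ) ≤ a + (1-β)⁻¹ ∫ max(h(x) - a, 0) dμ` for every `a ∈ ℝ`. -/
theorem cvar_le_rockafellar_uryasev_bound
    {X : Type*} [MeasurableSpace X] (μ : Measure X) [IsProbabilityMeasure μ]
    (h : X → ℝ) (hh : Measurable h) (M : ℝ) (hM : ∀ x, |h x| ≤ M)
    (hcdf : Continuous fun a : ℝ => (μ {x | h x ≤ a}).toReal)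
    (β : ℝ) (hβ : β ∈ Set.Ioo (0 : ℝ) 1) :
    ∀ a : ℝ, CVaR β h μ ≤ a + (1 - β)⁻¹ * ∫ x, max (h x - a) 0 ∂μ := by
  intro a
  obtain ⟨hβ0, hβ1⟩ := hβ
  set F : ℝ → ℝ := fun a => (μ {x | h x ≤ a}).toReal with hFdef
  set S : Set ℝ := {a : ℝ | β ≤ F a} with hSdef
  set v : ℝ := VaR β h μ with hvdef
  have hveq : v = sInf S := rfl
  have hMS : M ∈ S := by
    have huniv : {x | h x ≤ M} = Set.univ := by
      ext x; simp [le_trans (le_abs_self _) (hM x)]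
    simp [hSdef, hFdef, huniv, hβ1.le]
  have hSne : S.Nonempty := ⟨M, hMS⟩
  have hSbdd : BddBelow S := by
    refine ⟨-M - 1, fun b hb => ?_⟩
    by_contra hb'
    push_neg at hb'
    have hempty : {x | h x ≤ b} = ∅ := by
      ext x
      simp only [Set.mem_setOf_eq, Set.mem_empty_iff_false, iff_false, not_le]
      have := (abs_le.mp (hM x)).1
      linarith
    have hFb : F b = 0 := by simp [hFdef, hempty]
    simp only [hSdef, Set.mem_setOf_eq, hFb] at hb
    linarith
  have hSclosed : IsClosed S := IsClosed.preimage hcdf (isClosed_Ici : IsClosed (Set.Ici β))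
  have hvS : v ∈ S := hveq ▸ hSclosed.csInf_mem hSne hSbdd
  have hFv_ge : β ≤ F v := hvS
  have hFv_le : F v ≤ β := by
    by_contra hlt
    push_neg at hlt
    have hopen : IsOpen (F ⁻¹' Set.Ioi β) := hcdf.isOpen_preimage _ (isOpen_Ioi : IsOpen (Set.Ioi β))
    obtain ⟨ε, hε, hball⟩ := Metric.isOpen_iff.mp hopen v hlt
    have hmem : v - ε / 2 ∈ S := by
      have hb : v - ε / 2 ∈ Metric.ball v ε := by
        simp only [Metric.mem_ball, Real.dist_eq]
        rw [abs_lt]; constructor <;> linarith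
      have hb2 : β < F (v - ε / 2) := hball hb
      exact hb2.le
    have := csInf_le hSbdd hmem
    rw [← hveq] at this
    linarith
  have hFv : F v = β := le_antisymm hFv_le hFv_ge
  -- measure of strict sublevel set
  have hlt_le : (μ {x | h x < v}).toReal ≤ β := by
    rw [← hFv]
    exact ENNReal.toReal_mono (measure_ne_top μ _)
      (measure_mono fun x hx => (le_of_lt hx : h x ≤ v))
  have hlt_ge : β ≤ (μ {x | h x < v}).toReal := by
    have htend : Filter.Tendsto (fun ε : ℝ => F (v - ε)) (nhdsWithin 0 (Set.Ioi 0)) (nhds (F v)) := by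
      apply (hcdf.tendsto v).comp
      apply Filter.Tendsto.mono_left _ nhdsWithin_le_nhds
      have : Filter.Tendsto (fun ε : ℝ => v - ε) (nhds 0) (nhds (v - 0)) :=
        tendsto_const_nhds.sub Filter.tendsto_id
      simpa using this
    rw [← hFv]
    refine le_of_tendsto htend ?_
    filter_upwards [self_mem_nhdsWithin] with ε hε
    have hε' : (0 : ℝ) < ε := hε
    have hvv : v - ε < v := by linarith
    exact ENNReal.toReal_mono (measure_ne_top μ _)
      (measure_mono fun x hx => (lt_of_le_of_lt (hx : h x ≤ v - ε) hvv : h x < v))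
  have hlt_meas : (μ {x | h x < v}).toReal = β := le_antisymm hlt_le hlt_ge
  have hTmeas : MeasurableSet {x | v ≤ h x} := measurableSet_le measurable_const hh
  have hT : (μ {x | v ≤ h x}).toReal = 1 - β := by
    have hc : {x | v ≤ h x} = {x | h x < v}ᶜ := by ext x; simp
    have hmeas : MeasurableSet {x | h x < v} := measurableSet_lt hh measurable_const
    have hadd : (μ {x | h x < v}) + μ {x | h x < v}ᶜ = 1 := by
      rw [measure_add_measure_compl hmeas, measure_univ]
    have hadd' : (μ {x | h x < v}).toReal + (μ {x | h x < v}ᶜ).toReal = 1 := by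
      rw [← ENNReal.toReal_add (measure_ne_top μ _) (measure_ne_top μ _), hadd]
      simp
    rw [hc]
    linarith [hlt_meas, hadd']
  -- integrability
  have hint : Integrable h μ := by
    refine ⟨hh.aestronglyMeasurable, ?_⟩
    apply HasFiniteIntegral.of_bounded (C := M)
    exact Filter.Eventually.of_forall fun x => by simpa [Real.norm_eq_abs] using hM x
  have hintsub : Integrable (fun x => h x - a) μ := hint.sub (integrable_const a)
  have hintmax : Integrable (fun x => max (h x - a) 0) μ := hintsub.pos_part
  -- set integral comparison
  have h1 : ∫ x in {x | v ≤ h x}, h x ∂μ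
      = (∫ x in {x | v ≤ h x}, (h x - a) ∂μ) + a * (1 - β) := by
    rw [integral_sub hint.integrableOn (integrable_const a).integrableOn,
      setIntegral_const, measureReal_def, hT, smul_eq_mul]
    ring
  have h2 : (∫ x in {x | v ≤ h x}, (h x - a) ∂μ) ≤ ∫ x in {x | v ≤ h x}, max (h x - a) 0 ∂μ :=
    setIntegral_mono_on hintsub.integrableOn hintmax.integrableOn hTmeas
      fun x _ => le_max_left _ _
  have h3 : (∫ x in {x | v ≤ h x}, max (h x - a) 0 ∂μ) ≤ ∫ x, max (h x - a) 0 ∂μ :=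
    setIntegral_le_integral hintmax (Filter.Eventually.of_forall fun x => le_max_right _ _)
  have hkey : ∫ x in {x | v ≤ h x}, h x ∂μ ≤ (∫ x, max (h x - a) 0 ∂μ) + a * (1 - β) := by
    rw [h1]; linarith
  have hβpos : 0 < (1 - β)⁻¹ := inv_pos.mpr (by linarith)
  have : CVaR β h μ = (1 - β)⁻¹ * ∫ x in {x | v ≤ h x}, h x ∂μ := rfl
  rw [this]
  calc (1 - β)⁻¹ * ∫ x in {x | v ≤ h x}, h x ∂μ
      ≤ (1 - β)⁻¹ * ((∫ x, max (h x - a) 0 ∂μ) + a * (1 - β)) := by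
        exact mul_le_mul_of_nonneg_left hkey hβpos.le
    _ = a + (1 - β)⁻¹ * ∫ x, max (h x - a) 0 ∂μ := by
        have hne : (1 : ℝ) - β ≠ 0 := by linarith
        field_simp
        ring
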